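/- Let p be a prime with p > 2, let I be a finite index set of smart meters, let Ns and σ be positive natural numbers, let s : I → Fin Ns assign to each meter its contracted supplier, and let β : Fin Ns → (Fin σ → ZMod p) be an injective bit-encoding of supplier identities whose values are all 0 or 1. Let E : I → ZMod p be the meters' electricity data. For each meter i and supplier u, let c(i,u) ∈ ZMod p be 1 minus the output of the equality-test circuit of Algorithm 1 applied to the bit strings β(s i) and β(u) (so that c(i,u) indicates equality). Then for every supplier u, the NAA accumulation ∑_{i ∈ I} c(i,u) * E i equals ∑_{i ∈ I, s i = u} E i, the aggregate data of the meters contracted to supplier u. -/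

import Mathlib

private lemma naa_foldl_key {p : ℕ} (h01 : (0 : ZMod p) ≠ 1)
    {σ : ℕ} (a b : Fin σ → ZMod p)
    (ha : ∀ k, a k = 0 ∨ a k = 1) (hb : ∀ k, b k = 0 ∨ b k = 1) :
    ∀ (L : List (Fin σ)) (acc : ZMod p), (acc = 0 ∨ acc = 1) →
      (L.foldl (fun acc k =>
          acc + (a k + b k - 2 * a k * b k)
            - acc * (a k + b k - 2 * a k * b k)) acc = 0
        ∧ acc = 0 ∧ ∀ k ∈ L, a k = b k)
      ∨ (L.foldl (fun acc k =>
          acc + (a k + b k - 2 * a k * b k)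
            - acc * (a k + b k - 2 * a k * b k)) acc = 1
        ∧ ¬(acc = 0 ∧ ∀ k ∈ L, a k = b k)) := by
  have h10 : (1 : ZMod p) ≠ 0 := fun h => h01 h.symm
  intro L
  induction L with
  | nil =>
    intro acc hacc
    rcases hacc with h | h
    · left; simp [h]
    · right
      refine ⟨by simpa using h, ?_⟩
      rintro ⟨h0, -⟩
      rw [h0] at h
      exact h01 h
  | cons k L ih =>
    intro acc hacc
    have hx : (a k + b k - 2 * a k * b k = 0 ∧ a k = b k)
        ∨ (a k + b k - 2 * a k * b k = 1 ∧ a k ≠ b k) := by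
      rcases ha k with h1 | h1 <;> rcases hb k with h2 | h2
      · left; rw [h1, h2]; exact ⟨by ring, rfl⟩
      · right; rw [h1, h2]; exact ⟨by ring, h01⟩
      · right; rw [h1, h2]; exact ⟨by ring, h10⟩
      · left; rw [h1, h2]; exact ⟨by ring, rfl⟩
    set x := a k + b k - 2 * a k * b k with hxdef
    have hstep : (acc + x - acc * x = 0 ∧ acc = 0 ∧ a k = b k)
        ∨ (acc + x - acc * x = 1 ∧ ¬(acc = 0 ∧ a k = b k)) := by
      rcases hacc with h | h <;> rcases hx with ⟨hx0, hxe⟩ | ⟨hx1, hxe⟩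
      · left; rw [h, hx0]; exact ⟨by ring, rfl, hxe⟩
      · right; rw [h, hx1]
        exact ⟨by ring, fun hh => hxe hh.2⟩
      · right; rw [h, hx0]
        refine ⟨by ring, ?_⟩
        rintro ⟨h0, -⟩; exact h10 h0
      · right; rw [h, hx1]
        refine ⟨by ring, ?_⟩
        rintro ⟨h0, -⟩; exact h10 h0
    simp only [List.foldl_cons]
    rcases hstep with ⟨he, h0, heq⟩ | ⟨he, hne⟩
    · rcases ih (acc + x - acc * x) (Or.inl he) with ⟨hf, -, hall⟩ | ⟨hf, hnall⟩
      · left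
        refine ⟨hf, h0, ?_⟩
        intro j hj
        rcases List.mem_cons.mp hj with rfl | hj
        · exact heq
        · exact hall j hj
      · right
        refine ⟨hf, ?_⟩
        rintro ⟨-, hall⟩
        exact hnall ⟨he, fun j hj => hall j (List.mem_cons_of_mem _ hj)⟩
    · rcases ih (acc + x - acc * x) (Or.inr he) with ⟨hf0, h0, -⟩ | ⟨hf, -⟩
      · rw [he] at h0; exact absurd h0 h10
      · right
        refine ⟨hf, ?_⟩
        rintro ⟨h0, hall⟩
        exact hne ⟨h0, hall k List.mem_cons_self⟩

theorem naa_aggregation_correct (p : ℕ) (hp : p.Prime) (hp2 : 2 < p)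
    (I : Type*) [Fintype I] (Ns σ : ℕ) (hNs : 0 < Ns) (hσ : 0 < σ)
    (s : I → Fin Ns) (β : Fin Ns → Fin σ → ZMod p)
    (hβ : Function.Injective β)
    (hbits : ∀ u k, β u k = 0 ∨ β u k = 1)
    (E : I → ZMod p) (c : I → Fin Ns → ZMod p)
    (hc : ∀ i u, c i u =
      1 - (List.finRange σ).foldl
        (fun acc k =>
          acc + (β (s i) k + β u k - 2 * β (s i) k * β u k)
            - acc * (β (s i) k + β u k - 2 * β (s i) k * β u k)) 0) :
    ∀ u : Fin Ns,
      ∑ i : I, c i u * E i = ∑ i ∈ Finset.univ.filter (fun i => s i = u), E i := by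
  haveI : Fact (1 < p) := ⟨by omega⟩
  have h01 : (0 : ZMod p) ≠ 1 := zero_ne_one
  intro u
  rw [Finset.sum_filter]
  refine Finset.sum_congr rfl fun i _ => ?_
  have hkey := naa_foldl_key h01 (β (s i)) (β u) (hbits (s i)) (hbits u)
    (List.finRange σ) 0 (Or.inl rfl)
  by_cases hsu : s i = u
  · rcases hkey with ⟨hf, -⟩ | ⟨-, hn⟩
    · rw [hc i u, hf]
      simp [hsu]
    · exact absurd ⟨rfl, fun k _ => by rw [hsu]⟩ hn
  · rcases hkey with ⟨-, -, hall⟩ | ⟨hf, -⟩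
    · exact absurd (hβ (funext fun k => hall k (List.mem_finRange k))) hsu
    · rw [hc i u, hf]
      simp [hsu]
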